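/- arXiv:2307.04896 — 5 statements merged into one kernel-verified Lean document; each statement's English description precedes it below -/
import Mathlib

section
/- Let n ≥ 1, let Ω ⊆ ℂ be a nonempty open connected set, and let Γ* ⊂ ℂ be a lattice (the set of ℤ-linear combinations of two ℝ-linearly independent complex numbers). Let Q : Ω × ℂ → Matrix (Fin n) (Fin n) ℂ be holomorphic in (α,k) (jointly analytic), and suppose there exist maps W_X, W_Y : Γ* → GL(Fin n, ℂ) such that Q(α, k+γ) = (W_Y(γ))⁻¹ * Q(α,k) * W_X(γ) for all α ∈ Ω, k ∈ ℂ, γ ∈ Γ*. For α ∈ Ω define m(α,k) ∈ ℕ ∪ {∞} by: if the entire function k' ↦ det Q(α,k') is not identically zero, m(α,k) is the order of vanishing of k' ↦ det Q(α,k') at k' = k; otherwise m(α,k) = ∞ for all k. Assume there exists α₀ ∈ Ω such that for every α ∈ Ω and every k ∈ ℂ one has m(α₀,k) < ∞ and m(α,k) ≥ m(α₀,k). Then there exists a set A ⊆ Ω, discrete in Ω (A has no accumulation point in Ω), such that: for every α ∈ A and every k ∈ ℂ, m(α,k) = ∞; and for every α ∈ Ω \ A and every k ∈ ℂ, m(α,k)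 = m(α₀,k). -/
open Filter Set Topology Bornology

/-- Order comparison: if `D = C • D0` with `C ≠ 0`, the vanishing orders agree. -/
lemma aux_order (C : ℂ) (hC : C ≠ 0) (D D0 : ℂ → ℂ) (hprop : ∀ k', D k' = C * D0 k')
    (k : ℂ) (N N' : ℕ) (g h : ℂ → ℂ)
    (hgan : AnalyticOnNhd ℂ g Set.univ) (hgk : g k ≠ 0)
    (hfac0 : ∀ k', D0 k' = (k' - k) ^ N * g k')
    (hhan : AnalyticOnNhd ℂ h Set.univ) (hhk : h k ≠ 0)
    (hfac : ∀ k', D k' = (k' - k) ^ N' * h k')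
    (hNle : N ≤ N') : N' = N := by
  by_contra hne
  have hlt : N < N' := lt_of_le_of_ne hNle (Ne.symm hne)
  have he : N' - N ≠ 0 := Nat.sub_ne_zero_of_lt hlt
  have key : ∀ k' : ℂ, k' ≠ k → (k' - k) ^ (N' - N) * h k' = C * g k' := by
    intro k' hkk
    have hsk : (k' - k) ≠ 0 := sub_ne_zero.mpr hkk
    have h1 : (k' - k) ^ N' * h k' = C * ((k' - k) ^ N * g k') := by
      rw [← hfac k', ← hfac0 k', hprop]
    have h2 : (k' - k) ^ N' = (k' - k) ^ N * (k' - k) ^ (N' - N) := by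
      rw [← pow_add, Nat.add_sub_cancel' hNle]
    apply mul_left_cancel₀ (pow_ne_zero N hsk)
    rw [h2] at h1
    linear_combination h1
  have hF : Filter.Tendsto (fun k' => (k' - k) ^ (N' - N) * h k') (𝓝[≠] k) (𝓝 0) := by
    have hc : ContinuousAt (fun k' : ℂ => (k' - k) ^ (N' - N) * h k') k :=
      (((continuous_id.sub continuous_const).pow _).continuousAt).mul
        (hhan k (Set.mem_univ k)).continuousAt
    have h0 : (fun k' : ℂ => (k' - k) ^ (N' - N) * h k') k = 0 := by
      simp [zero_pow he]
    have h1 := hc.tendsto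
    simp only [sub_self, zero_pow he, zero_mul] at h1
    exact h1.mono_left nhdsWithin_le_nhds
  have hG : Filter.Tendsto (fun k' => (k' - k) ^ (N' - N) * h k') (𝓝[≠] k) (𝓝 (C * g k)) := by
    have hc : Filter.Tendsto (fun k' => C * g k') (𝓝[≠] k) (𝓝 (C * g k)) :=
      ((continuousAt_const.mul (hgan k (Set.mem_univ k)).continuousAt).tendsto).mono_left
        nhdsWithin_le_nhds
    apply hc.congr'
    filter_upwards [self_mem_nhdsWithin] with k' hkk
    exact (key k' hkk).symm
  exact (mul_ne_zero hC hgk) (tendsto_nhds_unique hF hG).symm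

/-- A lattice with ℝ-independent generators admits a compact fundamental set. -/
lemma aux_compact (γ₁ γ₂ : ℂ) (hγ : LinearIndependent ℝ ![γ₁, γ₂])
    (Γs : Set ℂ) (hΓs : Γs = {z : ℂ | ∃ a b : ℤ, z = (a : ℂ) * γ₁ + (b : ℂ) * γ₂}) :
    ∃ P : Set ℂ, IsCompact P ∧ ∀ k : ℂ, ∃ γ ∈ Γs, k - γ ∈ P := by
  classical
  have hcard : Fintype.card (Fin 2) = Module.finrank ℝ ℂ := by
    simp [Complex.finrank_real_complex]
  let B : Module.Basis (Fin 2) ℝ ℂ := basisOfLinearIndependentOfCardEqFinrank hγ hcard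
  have hB : ⇑B = ![γ₁, γ₂] := coe_basisOfLinearIndependentOfCardEqFinrank hγ hcard
  refine ⟨(fun p : ℝ × ℝ => p.1 • γ₁ + p.2 • γ₂) '' (Set.Icc 0 1 ×ˢ Set.Icc 0 1),
    (isCompact_Icc.prod isCompact_Icc).image (by fun_prop), ?_⟩
  intro k
  set a := B.repr k 0 with ha
  set b := B.repr k 1 with hb
  have hk : k = a • γ₁ + b • γ₂ := by
    have h1 := B.sum_repr k
    rw [Fin.sum_univ_two] at h1
    rw [show B 0 = γ₁ by rw [hB]; rfl, show B 1 = γ₂ by rw [hB]; rfl] at h1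
    exact h1.symm
  refine ⟨(⌊a⌋ : ℂ) * γ₁ + (⌊b⌋ : ℂ) * γ₂, by rw [hΓs]; exact ⟨⌊a⌋, ⌊b⌋, rfl⟩,
    ⟨(Int.fract a, Int.fract b),
      ⟨⟨Int.fract_nonneg a, (Int.fract_lt_one a).le⟩,
       ⟨Int.fract_nonneg b, (Int.fract_lt_one b).le⟩⟩, ?_⟩⟩
  rw [hk]
  simp only [Int.fract, Complex.real_smul]
  push_cast
  ring

lemma aux_det_analytic {n : ℕ} (f : ℂ → Matrix (Fin n) (Fin n) ℂ) (S : Set ℂ)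
    (hf : ∀ i j, AnalyticOnNhd ℂ (fun z => f z i j) S) :
    AnalyticOnNhd ℂ (fun z => (f z).det) S := by
  intro z hz
  have hrw : (fun z => (f z).det) = fun z =>
      ∑ σ : Equiv.Perm (Fin n), ((Equiv.Perm.sign σ : ℤ) : ℂ) * ∏ i, f z (σ i) i := by
    funext w; rw [Matrix.det_apply']
  rw [hrw]
  exact Finset.analyticAt_fun_sum _ fun σ _ =>
    analyticAt_const.mul (Finset.analyticAt_fun_prod _ fun i _ => hf (σ i) i z hz)

/-- Core: a ratio of two entire functions, whose order comparison is pinned by the given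
factorizations, and which is periodic with respect to a cocompact lattice, is constant. -/
lemma aux_prop (D D0 : ℂ → ℂ)
    (N N' : ℂ → ℕ) (g h : ℂ → ℂ → ℂ)
    (hgan : ∀ k, AnalyticOnNhd ℂ (g k) Set.univ) (hgk : ∀ k, g k k ≠ 0)
    (hfac0 : ∀ k k', D0 k' = (k' - k) ^ N k * g k k')
    (hhan : ∀ k, AnalyticOnNhd ℂ (h k) Set.univ) (hhk : ∀ k, h k k ≠ 0)
    (hfac : ∀ k k', D k' = (k' - k) ^ N' k * h k k')
    (hNle : ∀ k, N k ≤ N' k)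
    (Γs : Set ℂ) (c : ℂ → ℂ) (hc : ∀ γ ∈ Γs, c γ ≠ 0)
    (hper0 : ∀ k, ∀ γ ∈ Γs, D0 (k + γ) = c γ * D0 k)
    (hper : ∀ k, ∀ γ ∈ Γs, D (k + γ) = c γ * D k)
    (P : Set ℂ) (hPc : IsCompact P) (hPd : ∀ k : ℂ, ∃ γ ∈ Γs, k - γ ∈ P)
    (k₂ : ℂ) (hk₂ : D0 k₂ ≠ 0) :
    ∀ k, D k = (D k₂ / D0 k₂) * D0 k := by
  classical
  set Φ : ℂ → ℂ := fun k => (0 : ℂ) ^ (N' k - N k) * h k k / g k k with hΦdef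
  have hN0 : ∀ k, D0 k ≠ 0 → N k = 0 := by
    intro k hk
    by_contra hNk
    exact hk (by simpa [sub_self, zero_pow hNk] using hfac0 k k)
  have hD0g : ∀ k, D0 k ≠ 0 → D0 k = g k k := by
    intro k hk
    simpa [hN0 k hk] using hfac0 k k
  have hratio : ∀ k, D0 k ≠ 0 → Φ k = D k / D0 k := by
    intro k hk
    have hNk := hN0 k hk
    have hgg := hD0g k hk
    rcases Nat.eq_zero_or_pos (N' k) with h0 | h1
    · have hD : D k = h k k := by simpa [h0] using hfac k k
      simp [hΦdef, hNk, h0, hD, hgg]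
    · have hD : D k = 0 := by simpa [sub_self, zero_pow h1.ne'] using hfac k k
      simp [hΦdef, hNk, zero_pow h1.ne', hD]
  have hΦan : ∀ k₀ : ℂ, AnalyticAt ℂ Φ k₀ := by
    intro k₀
    have hgan₀ : AnalyticAt ℂ (g k₀) k₀ := hgan k₀ k₀ (Set.mem_univ _)
    have hψ : AnalyticAt ℂ (fun k' => (k' - k₀) ^ (N' k₀ - N k₀) * h k₀ k' / g k₀ k') k₀ :=
      (((analyticAt_id.sub analyticAt_const).pow _).mul (hhan k₀ k₀ (Set.mem_univ _))).div
        hgan₀ (hgk k₀)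
    apply hψ.congr
    have hev : ∀ᶠ k' in 𝓝 k₀, g k₀ k' ≠ 0 := hgan₀.continuousAt.eventually_ne (hgk k₀)
    filter_upwards [hev] with k' hgk'
    by_cases hkk : k' = k₀
    · subst hkk; simp [hΦdef]
    · have hD0k' : D0 k' ≠ 0 := by
        rw [hfac0 k₀ k']
        exact mul_ne_zero (pow_ne_zero _ (sub_ne_zero.mpr hkk)) hgk'
      rw [hratio k' hD0k']
      have hsub : (k' - k₀) ^ N' k₀ = (k' - k₀) ^ (N' k₀ - N k₀) * (k' - k₀) ^ N k₀ := by
        rw [← pow_add, Nat.sub_add_cancel (hNle k₀)]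
      rw [hfac k₀ k', hfac0 k₀ k', hsub,
        div_eq_div_iff hgk' (mul_ne_zero (pow_ne_zero _ (sub_ne_zero.mpr hkk)) hgk')]
      ring
  have hΦid : ∀ k, D k = Φ k * D0 k := by
    intro k
    by_cases hk : D0 k = 0
    · have hNk : N k ≠ 0 := by
        intro h0
        exact hgk k (by simpa [h0] using (hfac0 k k).symm.trans hk)
      have hN'k : N' k ≠ 0 := fun h0 => hNk (Nat.le_zero.mp (h0 ▸ hNle k))
      have hD : D k = 0 := by simpa [sub_self, zero_pow hN'k] using hfac k k
      simp [hD, hk]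
    · rw [hratio k hk, div_mul_cancel₀ _ hk]
  have hΦdiff : Differentiable ℂ Φ := fun k => (hΦan k).differentiableAt
  have hΦper : ∀ γ ∈ Γs, ∀ k, Φ (k + γ) = Φ k := by
    intro γ hγm
    have h1 : AnalyticOnNhd ℂ (fun k => Φ (k + γ)) Set.univ := by
      intro k _
      have hadd : AnalyticAt ℂ (fun k' : ℂ => k' + γ) k := analyticAt_id.add analyticAt_const
      exact AnalyticAt.comp (g := Φ) (f := fun k' : ℂ => k' + γ) (x := k) (hΦan (k + γ)) hadd
    have h2 : AnalyticOnNhd ℂ Φ Set.univ := fun k _ => hΦan k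
    have hcontD0 : ContinuousAt D0 k₂ := by
      have hrw : D0 = fun k' => (k' - k₂) ^ N k₂ * g k₂ k' := funext (hfac0 k₂)
      rw [hrw]
      exact (((continuous_id.sub continuous_const).pow _).continuousAt).mul
        (hgan k₂ k₂ (Set.mem_univ _)).continuousAt
    have hev : ∀ᶠ k in 𝓝 k₂, D0 k ≠ 0 := hcontD0.eventually_ne hk₂
    have heq : (fun k => Φ (k + γ)) =ᶠ[𝓝 k₂] Φ := by
      filter_upwards [hev] with k hk
      have hD0γ : D0 (k + γ) ≠ 0 := by
        rw [hper0 k γ hγm]; exact mul_ne_zero (hc γ hγm) hk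
      rw [hratio _ hD0γ, hratio k hk, hper0 k γ hγm, hper k γ hγm,
        mul_div_mul_left _ _ (hc γ hγm)]
    have := h1.eqOn_of_preconnected_of_eventuallyEq h2 isPreconnected_univ (Set.mem_univ k₂) heq
    intro k
    exact this (Set.mem_univ k)
  have hbdd : IsBounded (Set.range Φ) := by
    apply ((hPc.image hΦdiff.continuous).isBounded).subset
    rintro _ ⟨k, rfl⟩
    obtain ⟨γ, hγm, hmem⟩ := hPd k
    have hEq : Φ k = Φ (k - γ) := by
      conv_lhs => rw [show k = (k - γ) + γ by ring]
      exact hΦper γ hγm (k - γ)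
    rw [hEq]
    exact Set.mem_image_of_mem _ hmem
  have hliou : ∀ k, Φ k = Φ k₂ := fun k => hΦdiff.apply_eq_apply_of_bounded hbdd k k₂
  intro k
  rw [hΦid k, hliou k, hratio k₂ hk₂]

/-- abstract magic-parameter theorem (Theorem 1) in the matrix case.
`m α k` is the order of vanishing of the entire function `k' ↦ det Q(α,k')` at `k`
(and `⊤` if that function vanishes identically); this is pinned down by the
hypotheses `hm_top` and `hm_fin`. -/
theorem flat_band_discreteness
    (n : ℕ) (hn : 1 ≤ n)
    (Ω : Set ℂ) (hΩne : Ω.Nonempty) (hΩo : IsOpen Ω) (hΩc : IsConnected Ω)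
    (γ₁ γ₂ : ℂ) (hγ : LinearIndependent ℝ ![γ₁, γ₂])
    (Γs : Set ℂ) (hΓs : Γs = {z : ℂ | ∃ a b : ℤ, z = (a : ℂ) * γ₁ + (b : ℂ) * γ₂})
    (Q : ℂ → ℂ → Matrix (Fin n) (Fin n) ℂ)
    (hQ : ∀ i j : Fin n,
      AnalyticOnNhd ℂ (fun p : ℂ × ℂ => Q p.1 p.2 i j) (Ω ×ˢ (Set.univ : Set ℂ)))
    (WX WY : ℂ → (Matrix (Fin n) (Fin n) ℂ)ˣ)
    (hW : ∀ α ∈ Ω, ∀ k : ℂ, ∀ γ ∈ Γs,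
      Q α (k + γ) =
        (↑(WY γ)⁻¹ : Matrix (Fin n) (Fin n) ℂ) * Q α k * (WX γ : Matrix (Fin n) (Fin n) ℂ))
    (m : ℂ → ℂ → ℕ∞)
    (hm_top : ∀ α ∈ Ω, (∀ k : ℂ, (Q α k).det = 0) → ∀ k : ℂ, m α k = ⊤)
    (hm_fin : ∀ α ∈ Ω, ¬ (∀ k : ℂ, (Q α k).det = 0) → ∀ k : ℂ,
      ∃ (N : ℕ) (g : ℂ → ℂ), m α k = (N : ℕ∞) ∧ AnalyticOnNhd ℂ g Set.univ ∧ g k ≠ 0 ∧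
        ∀ k' : ℂ, (Q α k').det = (k' - k) ^ N * g k')
    (α₀ : ℂ) (hα₀ : α₀ ∈ Ω)
    (hyp : ∀ α ∈ Ω, ∀ k : ℂ, m α₀ k ≠ ⊤ ∧ m α₀ k ≤ m α k) :
    ∃ A ⊆ Ω, (∀ z ∈ Ω, ¬ AccPt z (Filter.principal A)) ∧
      (∀ α ∈ A, ∀ k : ℂ, m α k = ⊤) ∧
      (∀ α ∈ Ω \ A, ∀ k : ℂ, m α k = m α₀ k) := by
  classical
  have hD0ne : ¬ ∀ k : ℂ, (Q α₀ k).det = 0 := fun hcon =>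
    (hyp α₀ hα₀ 0).1 (hm_top α₀ hα₀ hcon 0)
  obtain ⟨k₂, hk₂⟩ : ∃ k : ℂ, (Q α₀ k).det ≠ 0 := by
    by_contra hcon; push_neg at hcon; exact hD0ne hcon
  -- multiplier of the determinant under lattice translation
  set c : ℂ → ℂ := fun γ =>
    ((↑(WY γ)⁻¹ : Matrix (Fin n) (Fin n) ℂ)).det * ((WX γ : Matrix (Fin n) (Fin n) ℂ)).det
    with hcdef
  have hc : ∀ γ, c γ ≠ 0 := by
    intro γ
    apply mul_ne_zero
    · intro h0
      have h1 : ((WY γ : Matrix (Fin n) (Fin n) ℂ)).det *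
          ((↑(WY γ)⁻¹ : Matrix (Fin n) (Fin n) ℂ)).det = 1 := by
        rw [← Matrix.det_mul, Units.mul_inv, Matrix.det_one]
      rw [h0, mul_zero] at h1
      exact one_ne_zero (α := ℂ) h1.symm
    · intro h0
      have h1 : ((WX γ : Matrix (Fin n) (Fin n) ℂ)).det *
          ((↑(WX γ)⁻¹ : Matrix (Fin n) (Fin n) ℂ)).det = 1 := by
        rw [← Matrix.det_mul, Units.mul_inv, Matrix.det_one]
      rw [h0, zero_mul] at h1
      exact one_ne_zero (α := ℂ) h1.symm
  have hper : ∀ α ∈ Ω, ∀ k : ℂ, ∀ γ ∈ Γs, (Q α (k + γ)).det = c γ * (Q α k).det := by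
    intro α hα k γ hγm
    rw [hW α hα k γ hγm, Matrix.det_mul, Matrix.det_mul, hcdef]
    ring
  obtain ⟨P, hPc, hPd⟩ := aux_compact γ₁ γ₂ hγ Γs hΓs
  -- main proportionality
  have main : ∀ α ∈ Ω, (¬ ∀ k : ℂ, (Q α k).det = 0) →
      ∀ k : ℂ, (Q α k).det = ((Q α k₂).det / (Q α₀ k₂).det) * (Q α₀ k).det := by
    intro α hα hDne
    choose N g hmN hgan hgk hfac using hm_fin α₀ hα₀ hD0ne
    choose N' h hmN' hhan hhk hfac' using hm_fin α hα hDne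
    have hNle : ∀ k, N k ≤ N' k := by
      intro k
      have hle := (hyp α hα k).2
      rw [hmN k, hmN' k] at hle
      exact_mod_cast hle
    exact aux_prop (fun k => (Q α k).det) (fun k => (Q α₀ k).det) N N' g h hgan hgk hfac
      hhan hhk hfac' hNle Γs c (fun γ _ => hc γ) (hper α₀ hα₀) (hper α hα) P hPc hPd k₂ hk₂
  refine ⟨{α | α ∈ Ω ∧ (Q α k₂).det = 0}, fun α hα => hα.1, ?_, ?_, ?_⟩
  · -- discreteness
    intro z hz hacc
    have hfan : AnalyticOnNhd ℂ (fun α => (Q α k₂).det) Ω := by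
      apply aux_det_analytic
      intro i j α hα
      have hin : AnalyticAt ℂ (fun α' : ℂ => (α', k₂)) α := analyticAt_id.prod analyticAt_const
      exact AnalyticAt.comp (g := fun p : ℂ × ℂ => Q p.1 p.2 i j)
        (f := fun α' : ℂ => (α', k₂)) (x := α)
        ((hQ i j) (α, k₂) ⟨hα, Set.mem_univ _⟩) hin
    rw [accPt_iff_frequently] at hacc
    have hfreq : ∃ᶠ w in 𝓝[≠] z, (Q w k₂).det = 0 := by
      rw [frequently_nhdsWithin_iff]
      exact hacc.mono fun w hw => ⟨hw.2.2, hw.1⟩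
    have hEq := hfan.eqOn_zero_of_preconnected_of_frequently_eq_zero
      hΩc.isPreconnected hz hfreq
    exact hk₂ (hEq hα₀)
  · -- on A the multiplicity is infinite
    intro α hα k
    apply hm_top α hα.1 _ k
    by_cases hcon : ∀ k' : ℂ, (Q α k').det = 0
    · exact hcon
    · intro k'
      rw [main α hα.1 hcon k', hα.2, zero_div, zero_mul]
  · -- off A the multiplicity equals that at α₀
    intro α hαmem k
    obtain ⟨hα, hαA⟩ := hαmem
    have hDk₂ : (Q α k₂).det ≠ 0 := fun h0 => hαA ⟨hα, h0⟩
    have hDne : ¬ ∀ k' : ℂ, (Q α k').det = 0 := fun hall => hDk₂ (hall k₂)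
    have hpropall := main α hα hDne
    have hCne : (Q α k₂).det / (Q α₀ k₂).det ≠ 0 := div_ne_zero hDk₂ hk₂
    obtain ⟨N, g, hmN, hgan, hgk, hfac0⟩ := hm_fin α₀ hα₀ hD0ne k
    obtain ⟨N', h, hmN', hhan, hhk, hfac⟩ := hm_fin α hα hDne k
    have hNle : N ≤ N' := by
      have hle := (hyp α hα k).2
      rw [hmN, hmN'] at hle
      exact_mod_cast hle
    have hEqN := aux_order _ hCne (fun k' => (Q α k').det) (fun k' => (Q α₀ k').det)
      hpropall k N N' g h hgan hgk hfac0 hhan hhk hfac hNle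
    rw [hmN, hmN', hEqN]
end

section
/- Let U : ℂ → ℂ be smooth, α, k ∈ ℂ, and let Γ := 3Λ where Λ := ℤω + ℤ ⊂ ℂ, ω := e^{2πi/3}. With D(α) and ℛ as below, the map u ↦ ℛu is a ℂ-linear bijection from {u : ℂ → ℂ² smooth, Γ-periodic, (D(α)+k)u = 0} onto {u : ℂ → ℂ² smooth, Γ-periodic, (D(-α)-k)u = 0}. In particular one kernel is nontrivial if and only if the other is. -/
/-- `(2D_{z̄}f)(z) = (1/i)(∂_{x₁}f(z) + i∂_{x₂}f(z))`, identifying `ℂ ≅ ℝ²`. -/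
noncomputable def Dbar2 (f : ℂ → ℂ) (z : ℂ) : ℂ :=
  Complex.I⁻¹ * (fderiv ℝ f z 1 + Complex.I * fderiv ℝ f z Complex.I)

/-- The chiral-model operator `D(α)` with potential `U`. -/
noncomputable def Dop (U : ℂ → ℂ) (α : ℂ) (u : ℂ → ℂ × ℂ) (z : ℂ) : ℂ × ℂ :=
  (Dbar2 (fun w => (u w).1) z + α * U z * (u z).2,
   α * U (-z) * (u z).1 + Dbar2 (fun w => (u w).2) z)

/-- `(ℛu)(z) = (u₂(-z), u₁(-z))`. -/
def Rop (u : ℂ → ℂ × ℂ) (z : ℂ) : ℂ × ℂ := ((u (-z)).2, (u (-z)).1)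

noncomputable def omega : ℂ := Complex.exp (2 * Real.pi * Complex.I / 3)

/-- `Λ = ℤω ⊕ ℤ`. -/
noncomputable def Lambda : Set ℂ := {w | ∃ m n : ℤ, w = (m : ℂ) * omega + (n : ℂ)}

/-- `Γ = 3Λ`. -/
noncomputable def Gamma : Set ℂ := {w | ∃ v ∈ Lambda, w = 3 * v}

lemma Dbar2_neg_comp (f : ℂ → ℂ) (hf : Differentiable ℝ f) (z : ℂ) :
    Dbar2 (fun w => f (-w)) z = -Dbar2 f (-z) := by
  have h1 : HasFDerivAt (fun w : ℂ => -w) (-(ContinuousLinearMap.id ℝ ℂ)) z :=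
    (hasFDerivAt_id z).neg
  have h3 := ((hf (-z)).hasFDerivAt).comp z h1
  have h4 : fderiv ℝ (fun w => f (-w)) z
      = (fderiv ℝ f (-z)).comp (-(ContinuousLinearMap.id ℝ ℂ)) := h3.fderiv
  simp only [Dbar2, h4, ContinuousLinearMap.comp_apply, ContinuousLinearMap.neg_apply,
    ContinuousLinearMap.id_apply, map_neg]
  ring

lemma neg_mem_Gamma {γ : ℂ} (hγ : γ ∈ Gamma) : -γ ∈ Gamma := by
  obtain ⟨v, ⟨m, n, hv⟩, rfl⟩ := hγ
  exact ⟨-v, ⟨-m, -n, by push_cast [hv]; ring⟩, by ring⟩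

lemma Rop_smooth {u : ℂ → ℂ × ℂ} (hu : ContDiff ℝ (⊤ : ℕ∞) u) :
    ContDiff ℝ (⊤ : ℕ∞) (Rop u) := by
  have h := hu.comp contDiff_neg
  exact h.snd.prodMk h.fst

lemma Dop_Rop (U : ℂ → ℂ) (α : ℂ) (u : ℂ → ℂ × ℂ) (hu : ContDiff ℝ (⊤ : ℕ∞) u) (z : ℂ) :
    Dop U (-α) (Rop u) z = -(Rop (Dop U α u) z) := by
  have h1 : Differentiable ℝ (fun w => (u w).1) := (hu.fst).differentiable (by simp)
  have h2 : Differentiable ℝ (fun w => (u w).2) := (hu.snd).differentiable (by simp)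
  have e1 := Dbar2_neg_comp (fun w => (u w).2) h2 z
  have e2 := Dbar2_neg_comp (fun w => (u w).1) h1 z
  beta_reduce at e1 e2
  simp only [Dop, Rop, Prod.neg_mk, Prod.mk.injEq]
  rw [e1, e2]
  constructor <;> ring

lemma Rop_Rop (u : ℂ → ℂ × ℂ) : Rop (Rop u) = u := by
  funext z; simp [Rop]

lemma Rop_maps (U : ℂ → ℂ) (α k : ℂ) {u : ℂ → ℂ × ℂ}
    (hu : ContDiff ℝ (⊤ : ℕ∞) u) (hper : ∀ z : ℂ, ∀ γ ∈ Gamma, u (z + γ) = u z)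
    (hker : ∀ z : ℂ, Dop U α u z + k • u z = 0) :
    ContDiff ℝ (⊤ : ℕ∞) (Rop u) ∧ (∀ z : ℂ, ∀ γ ∈ Gamma, Rop u (z + γ) = Rop u z) ∧
      ∀ z : ℂ, Dop U (-α) (Rop u) z - k • Rop u z = 0 := by
  refine ⟨Rop_smooth hu, ?_, ?_⟩
  · intro z γ hγ
    have : -(z + γ) = -z + -γ := by ring
    simp only [Rop, this, hper (-z) (-γ) (neg_mem_Gamma hγ)]
  · intro z
    have h := hker (-z)
    have hD : Dop U α u (-z) = -(k • u (-z)) := by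
      have := congrArg (fun x => x - k • u (-z)) h
      simpa [sub_eq_add_neg, add_assoc] using this
    rw [Dop_Rop U α u hu z]
    have : Rop (Dop U α u) z = -(k • Rop u z) := by
      simp only [Rop, hD, Prod.neg_mk, Prod.smul_mk, Prod.fst_neg, Prod.snd_neg,
        Prod.smul_fst, Prod.smul_snd]
    rw [this]
    simp

/-- `ℛ` is a ℂ-linear bijection from the smooth `Γ`-periodic kernel of
`D(α)+k` onto that of `D(-α)-k`; in particular one kernel is nontrivial iff the other is. -/
theorem R_bijects_kernels
    (U : ℂ → ℂ) (hU : ContDiff ℝ (⊤ : ℕ∞) U) (α k : ℂ) :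
    Set.BijOn Rop
      {u : ℂ → ℂ × ℂ | ContDiff ℝ (⊤ : ℕ∞) u ∧ (∀ z : ℂ, ∀ γ ∈ Gamma, u (z + γ) = u z) ∧
        ∀ z : ℂ, Dop U α u z + k • u z = 0}
      {u : ℂ → ℂ × ℂ | ContDiff ℝ (⊤ : ℕ∞) u ∧ (∀ z : ℂ, ∀ γ ∈ Gamma, u (z + γ) = u z) ∧
        ∀ z : ℂ, Dop U (-α) u z - k • u z = 0} ∧
    (∀ u v : ℂ → ℂ × ℂ, Rop (u + v) = Rop u + Rop v) ∧
    (∀ (c : ℂ) (u : ℂ → ℂ × ℂ), Rop (c • u) = c • Rop u) ∧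
    ((∃ u : ℂ → ℂ × ℂ, (ContDiff ℝ (⊤ : ℕ∞) u ∧ (∀ z : ℂ, ∀ γ ∈ Gamma, u (z + γ) = u z) ∧
        ∀ z : ℂ, Dop U α u z + k • u z = 0) ∧ u ≠ 0) ↔
      (∃ u : ℂ → ℂ × ℂ, (ContDiff ℝ (⊤ : ℕ∞) u ∧ (∀ z : ℂ, ∀ γ ∈ Gamma, u (z + γ) = u z) ∧
        ∀ z : ℂ, Dop U (-α) u z - k • u z = 0) ∧ u ≠ 0)) := by
  have fwd : ∀ u ∈ {u : ℂ → ℂ × ℂ | ContDiff ℝ (⊤ : ℕ∞) u ∧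
      (∀ z : ℂ, ∀ γ ∈ Gamma, u (z + γ) = u z) ∧ ∀ z : ℂ, Dop U α u z + k • u z = 0},
      Rop u ∈ {u : ℂ → ℂ × ℂ | ContDiff ℝ (⊤ : ℕ∞) u ∧
      (∀ z : ℂ, ∀ γ ∈ Gamma, u (z + γ) = u z) ∧ ∀ z : ℂ, Dop U (-α) u z - k • u z = 0} := by
    rintro u ⟨h1, h2, h3⟩
    exact Rop_maps U α k h1 h2 h3
  have bwd : ∀ u ∈ {u : ℂ → ℂ × ℂ | ContDiff ℝ (⊤ : ℕ∞) u ∧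
      (∀ z : ℂ, ∀ γ ∈ Gamma, u (z + γ) = u z) ∧ ∀ z : ℂ, Dop U (-α) u z - k • u z = 0},
      Rop u ∈ {u : ℂ → ℂ × ℂ | ContDiff ℝ (⊤ : ℕ∞) u ∧
      (∀ z : ℂ, ∀ γ ∈ Gamma, u (z + γ) = u z) ∧ ∀ z : ℂ, Dop U α u z + k • u z = 0} := by
    rintro u ⟨h1, h2, h3⟩
    have h3' : ∀ z : ℂ, Dop U (-α) u z + (-k) • u z = 0 := by
      intro z; have := h3 z; simpa [sub_eq_add_neg, neg_smul] using this
    obtain ⟨g1, g2, g3⟩ := Rop_maps U (-α) (-k) h1 h2 h3'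
    refine ⟨g1, g2, fun z => ?_⟩
    have := g3 z
    simpa [sub_eq_add_neg, neg_neg, neg_smul] using this
  have hRne : ∀ u : ℂ → ℂ × ℂ, u ≠ 0 → Rop u ≠ 0 := by
    intro u hu h
    apply hu
    have := congrArg Rop h
    rw [Rop_Rop] at this
    rw [this]
    funext z; simp [Rop]
  refine ⟨⟨fwd, ?_, ?_⟩, ?_, ?_, ?_⟩
  · intro u _ v _ h
    have := congrArg Rop h
    rwa [Rop_Rop, Rop_Rop] at this
  · intro v hv
    exact ⟨Rop v, bwd v hv, Rop_Rop v⟩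
  · intro u v; funext z; simp [Rop]
  · intro c u; funext z; simp [Rop]
  · constructor
    · rintro ⟨u, hu, hne⟩
      exact ⟨Rop u, fwd u hu, hRne u hne⟩
    · rintro ⟨u, hu, hne⟩
      exact ⟨Rop u, bwd u hu, hRne u hne⟩
end

section
/- Let U : ℂ → ℂ be smooth and α ∈ ℂ. Set V(z) := U(z)·U(-z) and V₁ := 2D_{z̄}U. Then for every smooth u = (u₁,u₂) : ℂ → ℂ² and every z ∈ ℂ, the composition D(-α)(D(α)u) has components: first component (2D_{z̄})²u₁(z) - α²V(z)u₁(z) + α·V₁(z)·u₂(z), and second component (2D_{z̄})²u₂(z) - α²V(z)u₂(z) - α·V₁(-z)·u₁(z). In other words, D(-α)D(α) = ((2D_{z̄})² - α²V)⊗I_{ℂ²} + R(α), where R(α) is multiplication by the off-diagonal matrix with entries R₁₂(z) = αV₁(z) and R₂₁(z) = -αV₁(-z). -/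
private lemma dbar_add {f g : ℂ → ℂ} {z : ℂ} (hf : DifferentiableAt ℝ f z)
    (hg : DifferentiableAt ℝ g z) :
    Dbar2 (fun w => f w + g w) z = Dbar2 f z + Dbar2 g z := by
  simp only [Dbar2, fderiv_fun_add hf hg, ContinuousLinearMap.add_apply]
  ring

private lemma dbar_const_mul {f : ℂ → ℂ} {z : ℂ} (hf : DifferentiableAt ℝ f z) (c : ℂ) :
    Dbar2 (fun w => c * f w) z = c * Dbar2 f z := by
  simp only [Dbar2, fderiv_const_mul hf c, ContinuousLinearMap.smul_apply, smul_eq_mul]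
  ring

private lemma dbar_mul {f g : ℂ → ℂ} {z : ℂ} (hf : DifferentiableAt ℝ f z)
    (hg : DifferentiableAt ℝ g z) :
    Dbar2 (fun w => f w * g w) z = Dbar2 f z * g z + f z * Dbar2 g z := by
  simp only [Dbar2, fderiv_fun_mul hf hg, ContinuousLinearMap.add_apply,
    ContinuousLinearMap.smul_apply, smul_eq_mul]
  ring

private lemma dbar_neg_comp {f : ℂ → ℂ} (hf : Differentiable ℝ f) (z : ℂ) :
    Dbar2 (fun w => f (-w)) z = -Dbar2 f (-z) := by
  have hneg : fderiv ℝ (fun w : ℂ => -w) z = -(ContinuousLinearMap.id ℝ ℂ) := by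
    rw [fderiv_fun_neg, fderiv_id']
  have hc : fderiv ℝ (fun w => f (-w)) z
      = (fderiv ℝ f (-z)).comp (-(ContinuousLinearMap.id ℝ ℂ)) := by
    rw [show (fun w => f (-w)) = f ∘ (fun w : ℂ => -w) from rfl,
      fderiv_comp z (hf (-z)) ((differentiable_id.neg : Differentiable ℝ (fun w : ℂ => -w)) z), hneg]
  simp only [Dbar2, hc, ContinuousLinearMap.comp_apply, ContinuousLinearMap.neg_apply,
    ContinuousLinearMap.id_apply, map_neg]
  ring

private lemma dbar_smooth {f : ℂ → ℂ} (hf : ContDiff ℝ (⊤ : ℕ∞) f) :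
    ContDiff ℝ (⊤ : ℕ∞) (Dbar2 f) := by
  have hd : ContDiff ℝ (⊤ : ℕ∞) (fderiv ℝ f) := hf.fderiv_right (by exact_mod_cast le_top)
  have h1 : ContDiff ℝ (⊤ : ℕ∞) (fun z => fderiv ℝ f z 1) := hd.clm_apply contDiff_const
  have h2 : ContDiff ℝ (⊤ : ℕ∞) (fun z => fderiv ℝ f z Complex.I) := hd.clm_apply contDiff_const
  exact contDiff_const.mul (h1.add (contDiff_const.mul h2))

/-- the factorization `D(-α)D(α) = ((2D_{z̄})² - α²V) ⊗ I + R(α)`, with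
`V(z) = U(z)U(-z)`, `V₁ = 2D_{z̄}U`, and `R(α)` the off-diagonal matrix
with entries `R₁₂(z) = αV₁(z)`, `R₂₁(z) = -αV₁(-z)`. -/
theorem D_neg_D_factorization
    (U : ℂ → ℂ) (hU : ContDiff ℝ (⊤ : ℕ∞) U) (α : ℂ)
    (u : ℂ → ℂ × ℂ) (hu : ContDiff ℝ (⊤ : ℕ∞) u) (z : ℂ) :
    Dop U (-α) (fun w => Dop U α u w) z =
      (Dbar2 (fun w => Dbar2 (fun w' => (u w').1) w) z
          - α ^ 2 * (U z * U (-z)) * (u z).1 + α * Dbar2 U z * (u z).2,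
       Dbar2 (fun w => Dbar2 (fun w' => (u w').2) w) z
          - α ^ 2 * (U z * U (-z)) * (u z).2 - α * Dbar2 U (-z) * (u z).1) := by
  have hu1 : ContDiff ℝ (⊤ : ℕ∞) (fun w => (u w).1) := contDiff_fst.comp hu
  have hu2 : ContDiff ℝ (⊤ : ℕ∞) (fun w => (u w).2) := contDiff_snd.comp hu
  have hUn : ContDiff ℝ (⊤ : ℕ∞) (fun w => U (-w)) := hU.comp contDiff_neg
  have hDu1 := dbar_smooth hu1
  have hDu2 := dbar_smooth hu2
  simp only [Dop]
  apply Prod.ext <;> simp only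
  · rw [dbar_add (hDu1.differentiable (by simp) z)
      (((contDiff_const.mul hU).mul hu2).differentiable (by simp) z)]
    rw [show (fun w => α * U w * (u w).2) = (fun w => α * (U w * (u w).2)) by
      funext w; ring]
    rw [dbar_const_mul ((hU.mul hu2).differentiable (by simp) z) α,
      dbar_mul (hU.differentiable (by simp) z) (hu2.differentiable (by simp) z)]
    ring
  · rw [dbar_add (((contDiff_const.mul hUn).mul hu1).differentiable (by simp) z)
      (hDu2.differentiable (by simp) z)]
    rw [show (fun w => α * U (-w) * (u w).1) = (fun w => α * (U (-w) * (u w).1)) by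
      funext w; ring]
    rw [dbar_const_mul ((hUn.mul hu1).differentiable (by simp) z) α,
      dbar_mul (hUn.differentiable (by simp) z) (hu1.differentiable (by simp) z),
      dbar_neg_comp (hU.differentiable (by simp)) z]
    ring
end

section
/- Let ω := e^{2πi/3} and let V : ℂ → ℂ be smooth with V(ωz) = conj(ω)·V(z) for all z ∈ ℂ. For α, k ∈ ℂ define Q(α,k)u := (2D_{z̄}+k)((2D_{z̄}+k)u) - α²·V·u on smooth u : ℂ → ℂ. Then for every smooth u : ℂ → ℂ and every z ∈ ℂ, (Q(α,k)(u∘(ω·)))(z) = ω·(Q(α,ωk)u)(ωz), where u∘(ω·) denotes the function z ↦ u(ωz). That is, with (Ωu)(z) := u(ωz), the operator identity Q(α,k)Ω = ωΩQ(α,ωk) holds. -/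
/-- The scalar operator `Q(α,k)u = (2D_{z̄}+k)((2D_{z̄}+k)u) - α²·V·u`. -/
noncomputable def Qsc (V : ℂ → ℂ) (α k : ℂ) (u : ℂ → ℂ) (z : ℂ) : ℂ :=
  Dbar2 (fun w => Dbar2 u w + k * u w) z + k * (Dbar2 u z + k * u z) - α ^ 2 * V z * u z

lemma omega_cube : omega ^ 3 = 1 := by
  rw [omega, ← Complex.exp_nat_mul]
  push_cast
  rw [show (3:ℂ) * (2 * Real.pi * Complex.I / 3) = 2 * Real.pi * Complex.I by ring]
  exact Complex.exp_two_pi_mul_I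

lemma conj_omega_mul : (starRingEnd ℂ) omega * omega = 1 := by
  rw [mul_comm, Complex.mul_conj, Complex.normSq_eq_norm_sq]
  rw [omega, Complex.norm_exp]
  norm_num [Complex.div_re]

lemma conj_omega : (starRingEnd ℂ) omega = omega ^ 2 := by
  linear_combination conj_omega_mul * omega ^ 2 - (starRingEnd ℂ) omega * omega_cube

lemma dbar_comp (f : ℂ → ℂ) (z : ℂ) (hf : DifferentiableAt ℝ f (omega * z)) :
    Dbar2 (fun w => f (omega * w)) z = (starRingEnd ℂ) omega * Dbar2 f (omega * z) := by
  have hmul : DifferentiableAt ℝ (fun w : ℂ => omega * w) z :=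
    (ContinuousLinearMap.mul ℝ ℂ omega).differentiableAt
  have hfd : fderiv ℝ (fun w : ℂ => omega * w) z = ContinuousLinearMap.mul ℝ ℂ omega :=
    (ContinuousLinearMap.mul ℝ ℂ omega).fderiv
  have h1 : ∀ v : ℂ, fderiv ℝ (fun w => f (omega * w)) z v
      = fderiv ℝ f (omega * z) (omega * v) := by
    intro v
    have h := fderiv_comp (𝕜 := ℝ) z hf hmul
    have heq : (fun w => f (omega * w)) = f ∘ (fun w : ℂ => omega * w) := rfl
    rw [heq, h, hfd]
    simp
  set L := fderiv ℝ f (omega * z)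
  rw [Dbar2, Dbar2, h1, h1]
  have e1 : omega * 1 = (omega.re : ℝ) • (1:ℂ) + (omega.im : ℝ) • Complex.I := by
    simp [Complex.real_smul, Complex.ext_iff]
  have e2 : omega * Complex.I = (-omega.im : ℝ) • (1:ℂ) + (omega.re : ℝ) • Complex.I := by
    simp [Complex.real_smul, Complex.ext_iff]
  have hconj : (starRingEnd ℂ) omega = (omega.re : ℂ) - (omega.im : ℂ) * Complex.I := by
    simp [Complex.ext_iff]
  rw [e1, e2, L.map_add, L.map_add, L.map_smul, L.map_smul, L.map_smul, L.map_smul, hconj]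
  set a := L 1; set b := L Complex.I
  rw [Complex.inv_I]
  push_cast [Complex.real_smul]
  linear_combination (-(Complex.I * ↑omega.im * b)) * Complex.I_sq

lemma dbar_add_smul (c d : ℂ) (f g : ℂ → ℂ) (z : ℂ)
    (hf : DifferentiableAt ℝ f z) (hg : DifferentiableAt ℝ g z) :
    Dbar2 (fun w => c * f w + d * g w) z = c * Dbar2 f z + d * Dbar2 g z := by
  have h : fderiv ℝ (fun w => c * f w + d * g w) z
      = c • fderiv ℝ f z + d • fderiv ℝ g z := by
    rw [fderiv_fun_add (hf.const_mul c) (hg.const_mul d),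
      fderiv_const_mul hf c, fderiv_const_mul hg d]
  rw [Dbar2, Dbar2, Dbar2, h]
  simp only [ContinuousLinearMap.add_apply, ContinuousLinearMap.smul_apply, smul_eq_mul]
  ring

lemma dbar_differentiable (u : ℂ → ℂ) (hu : ContDiff ℝ (⊤ : ℕ∞) u) :
    Differentiable ℝ (Dbar2 u) := by
  have hfd : ContDiff ℝ (⊤ : ℕ∞) (fderiv ℝ u) := (contDiff_infty_iff_fderiv.mp hu).2
  have h1 : Differentiable ℝ (fun z => fderiv ℝ u z (1:ℂ)) :=
    (hfd.differentiable (by simp)).clm_apply (differentiable_const _)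
  have h2 : Differentiable ℝ (fun z => fderiv ℝ u z Complex.I) :=
    (hfd.differentiable (by simp)).clm_apply (differentiable_const _)
  exact (h1.add (h2.const_mul _)).const_mul _

/-- the rotation symmetry `Q(α,k)Ω = ωΩQ(α,ωk)` of the scalar model,
where `(Ωu)(z) = u(ωz)` and `V(ωz) = ω̄·V(z)`. -/
theorem Qsc_rotation_symmetry
    (V : ℂ → ℂ) (hV : ContDiff ℝ (⊤ : ℕ∞) V)
    (hVrot : ∀ z : ℂ, V (omega * z) = (starRingEnd ℂ) omega * V z)
    (α k : ℂ) (u : ℂ → ℂ) (hu : ContDiff ℝ (⊤ : ℕ∞) u) (z : ℂ) :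
    Qsc V α k (fun w => u (omega * w)) z = omega * Qsc V α (omega * k) u (omega * z) := by
  have hud : Differentiable ℝ u := hu.differentiable (by simp)
  have hDd : Differentiable ℝ (Dbar2 u) := dbar_differentiable u hu
  set c : ℂ := (starRingEnd ℂ) omega with hc
  -- Dbar2 of the rotated u
  have hΩ : Dbar2 (fun w => u (omega * w)) = fun w => c * Dbar2 u (omega * w) :=
    funext fun w => dbar_comp u w (hud _)
  set g : ℂ → ℂ := fun w => c * Dbar2 u w + k * u w with hg
  have hgd : Differentiable ℝ g := (hDd.const_mul c).add (hud.const_mul k)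
  have hinner : (fun w => Dbar2 (fun w' => u (omega * w')) w + k * u (omega * w))
      = fun w => g (omega * w) := by
    funext w
    rw [hΩ]
  have hDg : Dbar2 g (omega * z)
      = c * Dbar2 (Dbar2 u) (omega * z) + k * Dbar2 u (omega * z) :=
    dbar_add_smul c k (Dbar2 u) u (omega * z) (hDd _) (hud _)
  have hRHSinner : (fun w => Dbar2 u w + omega * k * u w)
      = fun w => (1:ℂ) * Dbar2 u w + (omega * k) * u w := by
    funext w; ring
  rw [Qsc, Qsc, hinner, hΩ, dbar_comp g z (hgd _), hDg, hVrot z, hRHSinner,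
    dbar_add_smul 1 (omega * k) (Dbar2 u) u (omega * z) (hDd _) (hud _), hc, conj_omega]
  linear_combination (omega * Dbar2 (Dbar2 u) (omega * z) - (omega * k)^2 * u (omega * z)
    + α ^ 2 * V z * u (omega * z) * omega
    - (α ^ 2 * V z * u (omega * z) * (omega - 1) + k^2 * u (omega * z) * (1 - omega^2))) * omega_cube
end

section
/- Let ω := e^{2πi/3}, Λ := ℤω + ℤ ⊂ ℂ, and Λ* := {γ ∈ ℂ : ⟨γ,λ⟩ ∈ 2πℤ for all λ ∈ Λ}. Let k ∈ ℂ with k ∉ Λ*. If u : ℂ → ℂ is smooth, Λ-periodic, and satisfies (2D_{z̄}+k)((2D_{z̄}+k)u) = 0 identically, then u = 0. -/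
/-- `⟨z,w⟩ = Re (z·w̄)`. -/
noncomputable def ip (z w : ℂ) : ℝ := (z * (starRingEnd ℂ) w).re

/-- The dual lattice `Λ* = {γ : ⟨γ,λ⟩ ∈ 2πℤ for all λ ∈ Λ}`. -/
noncomputable def LambdaStar : Set ℂ :=
  {γ | ∀ l ∈ Lambda, ∃ n : ℤ, ip γ l = 2 * Real.pi * (n : ℝ)}

namespace KTLaux

open Complex MeasureTheory Real intervalIntegral Set

noncomputable section

def P1 (f : ℂ → ℂ) (z : ℂ) : ℂ := fderiv ℝ f z 1
def P2 (f : ℂ → ℂ) (z : ℂ) : ℂ := fderiv ℝ f z Complex.I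
def eN (n : ℤ) (x : ℝ) : ℂ := Complex.exp ((-(2 * (π:ℂ) * n) * Complex.I) * x)
def coef (f : ℂ → ℂ) (n : ℤ) (y : ℝ) : ℂ :=
  ∫ x in (0:ℝ)..1, eN n x * f (x + y * Complex.I)

lemma eN_cont (n : ℤ) : Continuous (eN n) :=
  Complex.continuous_exp.comp (continuous_const.mul Complex.continuous_ofReal)

lemma eN_hasDeriv (n : ℤ) (x : ℝ) :
    HasDerivAt (eN n) ((-(2 * (π:ℂ) * n) * Complex.I) * eN n x) x := by
  have h0 : HasDerivAt (fun t : ℝ => ((-(2 * (π:ℂ) * n) * Complex.I) * t))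
      (-(2 * (π:ℂ) * n) * Complex.I) x := by
    simpa using (Complex.ofRealCLM.hasDerivAt (x := x)).const_mul (-(2 * (π:ℂ) * n) * Complex.I)
  have h := h0.cexp
  rw [show (-(2 * (π:ℂ) * n) * Complex.I) * eN n x
      = Complex.exp ((-(2 * (π:ℂ) * n) * Complex.I) * x) * (-(2 * (π:ℂ) * n) * Complex.I) from by
    rw [eN]; ring]
  exact h

lemma eN_add (n : ℤ) (x s : ℝ) : eN n (x + s) = eN n x * eN n s := by
  rw [eN, eN, eN, ← Complex.exp_add]; push_cast; ring_nf

lemma eN_one (n : ℤ) : eN n 1 = 1 := by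
  rw [eN, show (-(2 * (π:ℂ) * n) * Complex.I) * ((1:ℝ):ℂ) = (-n : ℤ) * (2 * π * Complex.I) by
    push_cast; ring]
  exact Complex.exp_int_mul_two_pi_mul_I (-n)

lemma eN_zero (n : ℤ) : eN n 0 = 1 := by simp [eN]

lemma eN_norm (n : ℤ) (x : ℝ) : ‖eN n x‖ = 1 := by
  simp [eN, Complex.norm_exp]

lemma eN_half (n : ℤ) (x : ℝ) :
    eN n (x - 1/2) = Complex.exp ((π:ℂ) * n * Complex.I) * eN n x := by
  rw [eN, eN, ← Complex.exp_add]
  congr 1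
  push_cast
  ring

lemma hasDerivAt_horiz {f : ℂ → ℂ} (hf : Differentiable ℝ f) (y x : ℝ) :
    HasDerivAt (fun t : ℝ => f (t + y * Complex.I)) (P1 f (x + y * Complex.I)) x := by
  have hc : HasDerivAt (fun t : ℝ => ((t : ℂ) + (y:ℂ) * Complex.I)) 1 x := by
    simpa using (Complex.ofRealCLM.hasDerivAt (x := x)).add_const ((y:ℂ) * Complex.I)
  simpa [P1, Function.comp_def] using ((hf _).hasFDerivAt.comp_hasDerivAt x hc)

lemma hasDerivAt_vert {f : ℂ → ℂ} (hf : Differentiable ℝ f) (x y : ℝ) :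
    HasDerivAt (fun t : ℝ => f (x + t * Complex.I)) (P2 f (x + y * Complex.I)) y := by
  have hc : HasDerivAt (fun t : ℝ => ((x : ℂ) + (t:ℂ) * Complex.I)) Complex.I y := by
    simpa using ((Complex.ofRealCLM.hasDerivAt (x := y)).mul_const Complex.I).const_add (x:ℂ)
  simpa [P2, Function.comp_def] using ((hf _).hasFDerivAt.comp_hasDerivAt y hc)

lemma contDiff_P1 {f : ℂ → ℂ} (hf : ContDiff ℝ (⊤:ℕ∞) f) : ContDiff ℝ (⊤:ℕ∞) (P1 f) :=
  (hf.fderiv_right (by exact_mod_cast le_top)).clm_apply contDiff_const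

lemma contDiff_P2 {f : ℂ → ℂ} (hf : ContDiff ℝ (⊤:ℕ∞) f) : ContDiff ℝ (⊤:ℕ∞) (P2 f) :=
  (hf.fderiv_right (by exact_mod_cast le_top)).clm_apply contDiff_const

lemma contDiff_dbar {f : ℂ → ℂ} (hf : ContDiff ℝ (⊤:ℕ∞) f) :
    ContDiff ℝ (⊤:ℕ∞) (Dbar2 f) := by
  have : Dbar2 f = fun z => Complex.I⁻¹ * (P1 f z + Complex.I * P2 f z) := rfl
  rw [this]
  exact contDiff_const.mul ((contDiff_P1 hf).add (contDiff_const.mul (contDiff_P2 hf)))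

lemma fderiv_shift {f : ℂ → ℂ} (hf : Differentiable ℝ f) (γ : ℂ) (hp : ∀ z, f (z + γ) = f z)
    (z : ℂ) : fderiv ℝ f (z + γ) = fderiv ℝ f z := by
  have h1 : HasFDerivAt (fun w => f (w + γ)) (fderiv ℝ f (z + γ)) z := by
    simpa [Function.comp_def] using ((hf (z + γ)).hasFDerivAt.comp z ((hasFDerivAt_id z).add_const γ))
  have h2 : (fun w => f (w + γ)) = f := funext hp
  rw [h2] at h1; exact h1.fderiv.symm

lemma dbar_shift {f : ℂ → ℂ} (hf : Differentiable ℝ f) (γ : ℂ) (hp : ∀ z, f (z + γ) = f z)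
    (z : ℂ) : Dbar2 f (z + γ) = Dbar2 f z := by
  rw [Dbar2, Dbar2, fderiv_shift hf γ hp]

lemma expc_hasDeriv (κ : ℂ) (y : ℝ) :
    HasDerivAt (fun t : ℝ => Complex.exp (κ * t)) (κ * Complex.exp (κ * y)) y := by
  have h0 : HasDerivAt (fun t : ℝ => (κ * t : ℂ)) κ y := by
    simpa using (Complex.ofRealCLM.hasDerivAt (x := y)).const_mul κ
  simpa [mul_comm] using h0.cexp

lemma cont_line {f : ℂ → ℂ} (hf : Continuous f) (y : ℝ) :
    Continuous fun x : ℝ => f (↑x + ↑y * Complex.I) := hf.comp (by continuity)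

lemma partsA {f : ℂ → ℂ} (hf : ContDiff ℝ (⊤:ℕ∞) f) (hp : ∀ z, f (z + 1) = f z) (n : ℤ) (y : ℝ) :
    (∫ x in (0:ℝ)..1, eN n x * P1 f (x + y * Complex.I))
      = (2 * (π:ℂ) * n * Complex.I) * coef f n y := by
  have hd : Differentiable ℝ f := hf.differentiable (by simp)
  have hcf : Continuous f := hf.continuous
  have hcP1 : Continuous (P1 f) := (contDiff_P1 hf).continuous
  set w : ℂ := -(2 * (π:ℂ) * n) * Complex.I with hw
  have hder : ∀ x ∈ Set.uIcc (0:ℝ) 1,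
      HasDerivAt (fun t : ℝ => eN n t * f (t + y * Complex.I))
        (w * eN n x * f (x + y * Complex.I) + eN n x * P1 f (x + y * Complex.I)) x := by
    intro x _
    have h := (eN_hasDeriv n x).mul (hasDerivAt_horiz hd y x)
    exact h
  have hc1 : Continuous fun x : ℝ => w * eN n x * f (↑x + ↑y * Complex.I) :=
    (continuous_const.mul (eN_cont n)).mul (cont_line hcf y)
  have hc2 : Continuous fun x : ℝ => eN n x * P1 f (↑x + ↑y * Complex.I) :=
    (eN_cont n).mul (cont_line hcP1 y)
  have heq := intervalIntegral.integral_eq_sub_of_hasDerivAt hder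
    ((hc1.add hc2).intervalIntegrable 0 1)
  have hbdry : eN n 1 * f (↑(1:ℝ) + ↑y * Complex.I) - eN n 0 * f (↑(0:ℝ) + ↑y * Complex.I) = 0 := by
    rw [eN_one, eN_zero, one_mul, one_mul, show ((1:ℝ):ℂ) + (y:ℂ) * Complex.I
        = (((0:ℝ):ℂ) + (y:ℂ) * Complex.I) + 1 by push_cast; ring, hp]
    ring
  rw [hbdry] at heq
  rw [intervalIntegral.integral_add (hc1.intervalIntegrable 0 1) (hc2.intervalIntegrable 0 1)] at heq
  have h3 : (∫ x in (0:ℝ)..1, w * eN n x * f (↑x + ↑y * Complex.I)) = w * coef f n y := by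
    simp_rw [mul_assoc]
    exact intervalIntegral.integral_const_mul w _
  rw [h3] at heq
  have h4 : (∫ x in (0:ℝ)..1, eN n x * P1 f (↑x + ↑y * Complex.I)) = -(w * coef f n y) := by
    linear_combination heq
  rw [h4, hw]; ring

lemma coef_hasDeriv {f : ℂ → ℂ} (hf : ContDiff ℝ (⊤:ℕ∞) f) (n : ℤ) (y₀ : ℝ) :
    HasDerivAt (coef f n) (coef (P2 f) n y₀) y₀ := by
  have hd : Differentiable ℝ f := hf.differentiable (by simp)
  have hcf : Continuous f := hf.continuous
  have hcP2 : Continuous (P2 f) := (contDiff_P2 hf).continuous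
  obtain ⟨C, hC⟩ : ∃ C, ∀ z ∈ (fun p : ℝ × ℝ => ((p.1 : ℂ) + (p.2 : ℂ) * Complex.I)) ''
      (Icc (0:ℝ) 1 ×ˢ Icc (y₀ - 1) (y₀ + 1)), ‖P2 f z‖ ≤ C := by
    have hK : IsCompact ((fun p : ℝ × ℝ => ((p.1 : ℂ) + (p.2 : ℂ) * Complex.I)) ''
        (Icc (0:ℝ) 1 ×ˢ Icc (y₀ - 1) (y₀ + 1))) :=
      ((isCompact_Icc).prod (isCompact_Icc)).image (by continuity)
    obtain ⟨C, hC⟩ := hK.exists_bound_of_continuousOn hcP2.continuousOn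
    exact ⟨C, hC⟩
  have main := intervalIntegral.hasDerivAt_integral_of_dominated_loc_of_deriv_le
    (𝕜 := ℝ) (E := ℂ)
    (F := fun y x => eN n x * f (↑x + ↑y * Complex.I))
    (F' := fun y x => eN n x * P2 f (↑x + ↑y * Complex.I))
    (x₀ := y₀) (a := 0) (b := 1) (bound := fun _ => C) (μ := volume)
    (Metric.ball_mem_nhds y₀ (by norm_num : (0:ℝ) < 1))
    (Filter.Eventually.of_forall fun y =>
      ((eN_cont n).mul (cont_line hcf y)).aestronglyMeasurable)
    (((eN_cont n).mul (cont_line hcf y₀)).intervalIntegrable 0 1)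
    (((eN_cont n).mul (cont_line hcP2 y₀)).aestronglyMeasurable)
    (Filter.Eventually.of_forall fun x hx => by
      intro y hy
      rw [norm_mul, eN_norm, one_mul]
      refine hC _ ⟨(x, y), ⟨?_, ?_⟩, rfl⟩
      · exact ⟨(Set.uIoc_of_le (by norm_num : (0:ℝ) ≤ 1) ▸ hx).1.le,
          (Set.uIoc_of_le (by norm_num : (0:ℝ) ≤ 1) ▸ hx).2⟩
      · have := Metric.mem_ball.mp hy
        rw [Real.dist_eq] at this
        constructor <;> [linarith [abs_lt.mp this]; linarith [abs_lt.mp this]])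
    (intervalIntegrable_const)
    (Filter.Eventually.of_forall fun x hx => by
      intro y hy
      exact (hasDerivAt_vert hd x y).const_mul (eN n x))
  exact main.2

lemma coef_op {f : ℂ → ℂ} (hf : ContDiff ℝ (⊤:ℕ∞) f) (hp : ∀ z, f (z + 1) = f z)
    (k : ℂ) (n : ℤ) (y : ℝ) :
    coef (fun z => Dbar2 f z + k * f z) n y
      = coef (P2 f) n y + (2 * (π:ℂ) * n + k) * coef f n y := by
  have hcf : Continuous f := hf.continuous
  have hcP1 : Continuous (P1 f) := (contDiff_P1 hf).continuous
  have hcP2 : Continuous (P2 f) := (contDiff_P2 hf).continuous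
  have hdbar : ∀ z, Dbar2 f z = -Complex.I * P1 f z + P2 f z := by
    intro z
    simp only [Dbar2, P1, P2, Complex.inv_I]
    rw [show -Complex.I * ((fderiv ℝ f z) 1 + Complex.I * (fderiv ℝ f z) Complex.I)
      = -Complex.I * (fderiv ℝ f z) 1 + (-(Complex.I*Complex.I)) * (fderiv ℝ f z) Complex.I
      from by ring, Complex.I_mul_I]
    ring
  have hi1 : IntervalIntegrable (fun x : ℝ => -Complex.I * (eN n x * P1 f (↑x + ↑y * Complex.I)))
      volume 0 1 :=
    (continuous_const.mul ((eN_cont n).mul (cont_line hcP1 y))).intervalIntegrable 0 1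
  have hi2 : IntervalIntegrable (fun x : ℝ => eN n x * P2 f (↑x + ↑y * Complex.I)) volume 0 1 :=
    ((eN_cont n).mul (cont_line hcP2 y)).intervalIntegrable 0 1
  have hi3 : IntervalIntegrable (fun x : ℝ => k * (eN n x * f (↑x + ↑y * Complex.I))) volume 0 1 :=
    (continuous_const.mul ((eN_cont n).mul (cont_line hcf y))).intervalIntegrable 0 1
  have hsplit : coef (fun z => Dbar2 f z + k * f z) n y
      = ∫ x in (0:ℝ)..1, (-Complex.I * (eN n x * P1 f (↑x + ↑y * Complex.I))
          + (eN n x * P2 f (↑x + ↑y * Complex.I)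
          + k * (eN n x * f (↑x + ↑y * Complex.I)))) := by
    rw [coef]
    refine intervalIntegral.integral_congr fun x _ => ?_
    rw [hdbar]
    ring
  rw [hsplit, intervalIntegral.integral_add hi1 (hi2.add hi3),
    intervalIntegral.integral_add hi2 hi3,
    intervalIntegral.integral_const_mul, intervalIntegral.integral_const_mul,
    partsA hf hp n y]
  have e2 : (∫ x in (0:ℝ)..1, eN n x * P2 f (↑x + ↑y * Complex.I)) = coef (P2 f) n y := rfl
  have e3 : (∫ x in (0:ℝ)..1, eN n x * f (↑x + ↑y * Complex.I)) = coef f n y := rfl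
  rw [e2, e3, show -Complex.I * (2 * (π:ℂ) * n * Complex.I * coef f n y)
      = (-(Complex.I * Complex.I)) * (2 * (π:ℂ) * n * coef f n y) from by ring,
    Complex.I_mul_I]
  ring

lemma omega_re : omega.re = -(1/2) := by
  rw [omega, show (2 * (Real.pi:ℂ) * Complex.I / 3) = ((2 * Real.pi / 3 : ℝ) : ℂ) * Complex.I by
    push_cast; ring, Complex.exp_ofReal_mul_I_re,
    show (2 * Real.pi / 3 : ℝ) = Real.pi - Real.pi / 3 by ring, Real.cos_pi_sub,
    Real.cos_pi_div_three]

lemma omega_im : omega.im = Real.sqrt 3 / 2 := by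
  rw [omega, show (2 * (Real.pi:ℂ) * Complex.I / 3) = ((2 * Real.pi / 3 : ℝ) : ℂ) * Complex.I by
    push_cast; ring, Complex.exp_ofReal_mul_I_im,
    show (2 * Real.pi / 3 : ℝ) = Real.pi - Real.pi / 3 by ring, Real.sin_pi_sub,
    Real.sin_pi_div_three]

lemma sqrt3_pos : (0:ℝ) < Real.sqrt 3 := Real.sqrt_pos.mpr (by norm_num)

/-- if `τ = exp(κ h + π n i) = 1` then `k ∈ Λ*`. -/
lemma mem_lambdaStar_of_exp {k : ℂ} {n : ℤ}
    (h1 : Complex.exp ((2 * (π:ℂ) * n + k) * ((Real.sqrt 3 / 2 : ℝ) : ℂ)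
        + (π:ℂ) * n * Complex.I) = 1) : k ∈ LambdaStar := by
  set κ : ℂ := 2 * (π:ℂ) * n + k with hκ
  obtain ⟨m, hm⟩ := Complex.exp_eq_one_iff.mp h1
  set h : ℝ := Real.sqrt 3 / 2 with hh
  have hhpos : (0:ℝ) < h := by positivity
  have hre : κ.re * h = 0 := by
    have := congrArg Complex.re hm
    simpa [Complex.add_re, Complex.mul_re, Complex.ofReal_re, Complex.ofReal_im,
      Complex.mul_im, Complex.I_re, Complex.I_im] using this
  have hkre : k.re = -(2 * π * n) := by
    have hκre : κ.re = 0 := by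
      rcases mul_eq_zero.mp hre with h' | h'
      · exact h'
      · exact absurd h' (ne_of_gt hhpos)
    have : κ.re = 2 * π * n + k.re := by
      simp [hκ, Complex.add_re, Complex.mul_re]
    linarith [this ▸ hκre]
  have hkim : k.im * h = 2 * π * m - π * n := by
    have := congrArg Complex.im hm
    have h2 : κ.im * h + π * n = (m:ℝ) * (2 * π) := by
      simpa [Complex.add_im, Complex.mul_im, Complex.mul_re, Complex.ofReal_re,
        Complex.ofReal_im, Complex.I_re, Complex.I_im] using this
    have h3 : κ.im = k.im := by simp [hκ, Complex.add_im, Complex.mul_im]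
    rw [h3] at h2; linarith
  intro l hl
  obtain ⟨M, N, rfl⟩ := hl
  refine ⟨M * m - N * n, ?_⟩
  have expand : ip k ((M:ℂ) * omega + (N:ℂ))
      = k.re * ((M:ℝ) * omega.re + N) + k.im * ((M:ℝ) * omega.im) := by
    simp [ip, map_add, map_mul, Complex.add_re, Complex.mul_re, Complex.mul_im,
      Complex.conj_re, Complex.conj_im, Complex.intCast_re, Complex.intCast_im]
    try ring
  rw [expand, hkre, omega_re, omega_im]
  have : k.im * ((M:ℝ) * (Real.sqrt 3 / 2)) = (M:ℝ) * (2 * π * m - π * n) := by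
    rw [show k.im * ((M:ℝ) * (Real.sqrt 3 / 2)) = (M:ℝ) * (k.im * h) by rw [hh]; ring, hkim]
  rw [this]
  push_cast
  ring


lemma coef_quasi {f : ℂ → ℂ} (hcf : Continuous f)
    (hp1 : ∀ z, f (z + 1) = f z) (hpw : ∀ z, f (z + omega) = f z) (n : ℤ) (y : ℝ) :
    coef f n (y + Real.sqrt 3 / 2)
      = Complex.exp ((π:ℂ) * n * Complex.I) * coef f n y := by
  have omega_eq : omega = ((-(1/2) : ℝ) : ℂ) + ((Real.sqrt 3 / 2 : ℝ) : ℂ) * Complex.I := by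
    apply Complex.ext
    · rw [omega_re]; simp
    · rw [omega_im]; simp
  have step1 : ∀ x : ℝ, f (↑x + ↑(y + Real.sqrt 3 / 2) * Complex.I)
      = f (↑(x + 1/2) + ↑y * Complex.I) := by
    intro x
    rw [← hpw (↑(x + 1/2) + ↑y * Complex.I)]
    congr 1
    rw [omega_eq]
    push_cast
    ring
  have step2 : coef f n (y + Real.sqrt 3 / 2)
      = ∫ x in (1/2 : ℝ)..(3/2 : ℝ), eN n (x - 1/2) * f (↑x + ↑y * Complex.I) := by
    rw [coef]
    have := intervalIntegral.integral_comp_add_right (a := (0:ℝ)) (b := 1)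
      (fun x : ℝ => eN n (x - 1/2) * f (↑x + ↑y * Complex.I)) (1/2)
    norm_num at this
    rw [← this]
    refine intervalIntegral.integral_congr fun x _ => ?_
    rw [step1 x]
    norm_num
  have hper : Function.Periodic (fun x : ℝ => eN n x * f (↑x + ↑y * Complex.I)) 1 := by
    intro x
    have h1 : eN n (x + 1) = eN n x := by rw [eN_add, eN_one, mul_one]
    have h2 : f (↑(x + 1) + ↑y * Complex.I) = f (↑x + ↑y * Complex.I) := by
      rw [show ((x + 1 : ℝ) : ℂ) + ↑y * Complex.I = ((x:ℂ) + ↑y * Complex.I) + 1 by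
        push_cast; ring, hp1]
    simp only [h1, h2]
  have step3 : (∫ x in (1/2 : ℝ)..(3/2 : ℝ), eN n (x - 1/2) * f (↑x + ↑y * Complex.I))
      = Complex.exp ((π:ℂ) * n * Complex.I)
        * ∫ x in (1/2 : ℝ)..(3/2 : ℝ), eN n x * f (↑x + ↑y * Complex.I) := by
    rw [← intervalIntegral.integral_const_mul]
    refine intervalIntegral.integral_congr fun x _ => ?_
    rw [eN_half]
    ring
  have step4 : (∫ x in (1/2 : ℝ)..(3/2 : ℝ), eN n x * f (↑x + ↑y * Complex.I))
      = coef f n y := by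
    have := hper.intervalIntegral_add_eq (1/2) 0
    norm_num at this
    rw [this, coef]
  rw [step2, step3, step4]

lemma fourier_complete {g : ℝ → ℂ} (hg : Continuous g)
    (hgp : ∀ (x : ℝ) (N : ℤ), g (x + N) = g x)
    (hc : ∀ n : ℤ, (∫ x in (0:ℝ)..1, eN n x * g x) = 0) : ∀ x, g x = 0 := by
  haveI : Fact ((0:ℝ) < 1) := ⟨one_pos⟩
  set F : AddCircle (1:ℝ) → ℂ := AddCircle.liftIco 1 0 g with hF
  have hFc : Continuous F := by
    apply AddCircle.liftIco_continuous
    · have h1 := hgp 0 1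
      norm_num at h1
      norm_num
      exact h1.symm
    · exact hg.continuousOn
  have hcoeff : ∀ n : ℤ, fourierCoeff F n = 0 := by
    intro n
    rw [hF, fourierCoeff_liftIco_eq]
    rw [fourierCoeffOn_eq_integral]
    norm_num
    have : ∀ x ∈ Set.uIcc (0:ℝ) 1,
        (starRingEnd ℂ) (Complex.exp (2 * (π:ℂ) * Complex.I * n * x)) * g x
        = eN n x * g x := by
      intro x _
      congr 1
      rw [← Complex.exp_conj, eN]
      congr 1
      simp only [map_mul, Complex.conj_I, Complex.conj_ofReal, map_intCast, map_ofNat]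
      ring
    rw [intervalIntegral.integral_congr this, hc n]
  set Fb := BoundedContinuousFunction.mkOfCompact (ContinuousMap.mk F hFc) with hFb
  set FL : Lp ℂ 2 (@AddCircle.haarAddCircle 1 _) :=
    BoundedContinuousFunction.toLp (E := ℂ) 2 AddCircle.haarAddCircle ℂ Fb with hFL
  have hae : ⇑FL =ᵐ[AddCircle.haarAddCircle] F := by
    have := BoundedContinuousFunction.coeFn_toLp (p := 2)
      (μ := (AddCircle.haarAddCircle : Measure (AddCircle (1:ℝ)))) (𝕜 := ℂ) Fb
    exact this
  have hrepr : ∀ i : ℤ, (fourierBasis.repr FL) i = 0 := by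
    intro i
    rw [fourierBasis_repr]
    have : fourierCoeff (⇑FL) i = fourierCoeff F i := by
      unfold fourierCoeff
      exact integral_congr_ae (hae.mono fun t ht => by dsimp only; rw [ht])
    rw [this]; exact hcoeff i
  have hFL0 : FL = 0 := by
    have : fourierBasis.repr FL = 0 := by
      apply lp.ext
      funext i
      simpa using hrepr i
    simpa using (LinearIsometryEquiv.map_eq_zero_iff fourierBasis.repr).mp this
  have hF0 : F = 0 := by
    have hae0 : F =ᵐ[AddCircle.haarAddCircle] 0 := by
      refine hae.symm.trans ?_
      rw [hFL0]
      exact Lp.coeFn_zero ℂ 2 _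
    exact (Continuous.ae_eq_iff_eq AddCircle.haarAddCircle hFc continuous_zero).mp hae0
  intro x
  have hx : Int.fract x ∈ Set.Ico (0:ℝ) (0 + 1) := by
    rw [zero_add]; exact ⟨Int.fract_nonneg x, Int.fract_lt_one x⟩
  have hgx : g x = g (Int.fract x) := by
    conv_lhs => rw [show x = Int.fract x + (⌊x⌋ : ℝ) by rw [Int.fract]; ring]
    exact hgp _ _
  rw [hgx, ← AddCircle.liftIco_coe_apply (f := g) hx, ← hF, hF0]
  rfl

end
end KTLaux

open KTLaux Complex Real in
/-- for `k ∉ Λ*`, the smooth `Λ`-periodic kernel of `(2D_{z̄}+k)²` is trivial. -/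
theorem kernel_trivial_off_dual_lattice
    (k : ℂ) (hk : k ∉ LambdaStar)
    (u : ℂ → ℂ) (hu : ContDiff ℝ (⊤ : ℕ∞) u)
    (hper : ∀ z : ℂ, ∀ γ ∈ Lambda, u (z + γ) = u z)
    (hker : ∀ z : ℂ, Dbar2 (fun w => Dbar2 u w + k * u w) z + k * (Dbar2 u z + k * u z) = 0) :
    u = 0 := by
  have hu_diff : Differentiable ℝ u := hu.differentiable (by simp)
  have h1mem : (1 : ℂ) ∈ Lambda := ⟨0, 1, by push_cast; ring⟩
  have hωmem : omega ∈ Lambda := ⟨1, 0, by push_cast; ring⟩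
  have hu1 : ∀ z, u (z + 1) = u z := fun z => hper z 1 h1mem
  have huω : ∀ z, u (z + omega) = u z := fun z => hper z omega hωmem
  set v : ℂ → ℂ := fun w => Dbar2 u w + k * u w with hv
  have hv_smooth : ContDiff ℝ (⊤ : ℕ∞) v := (contDiff_dbar hu).add (contDiff_const.mul hu)
  have hv1 : ∀ z, v (z + 1) = v z := fun z => by
    simp only [hv, dbar_shift hu_diff 1 hu1 z, hu1 z]
  have hvω : ∀ z, v (z + omega) = v z := fun z => by
    simp only [hv, dbar_shift hu_diff omega huω z, huω z]
  -- all Fourier coefficients vanish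
  have key : ∀ (n : ℤ) (y : ℝ), coef u n y = 0 := by
    intro n
    set κ : ℂ := 2 * (π:ℂ) * n + k with hκ
    set c : ℝ → ℂ := coef u n with hc
    set a : ℝ → ℂ := coef v n with ha
    have hca : ∀ y, a y = coef (P2 u) n y + κ * c y := fun y => coef_op hu hu1 k n y
    have haz : ∀ y, coef (P2 v) n y + κ * a y = 0 := by
      intro y
      have h0 := coef_op hv_smooth hv1 k n y
      have hz : (fun z => Dbar2 v z + k * v z) = fun _ => (0:ℂ) := funext hker
      rw [hz] at h0
      have : coef (fun _ => (0:ℂ)) n y = 0 := by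
        simp [coef]
      rw [this] at h0
      linear_combination -h0
    -- exp(κ y) * a y is constant
    have hGd : ∀ y : ℝ, HasDerivAt (fun t : ℝ => Complex.exp (κ * t) * a t) 0 y := by
      intro y
      have h := (expc_hasDeriv κ y).mul ((coef_hasDeriv hv_smooth n y))
      have heq : κ * Complex.exp (κ * y) * a y + Complex.exp (κ * y) * coef (P2 v) n y = 0 := by
        have := haz y
        calc κ * Complex.exp (κ * y) * a y + Complex.exp (κ * y) * coef (P2 v) n y
            = Complex.exp (κ * y) * (coef (P2 v) n y + κ * a y) := by ring
          _ = 0 := by rw [haz y]; ring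
      rw [← heq]
      exact h
    have hGconst : ∀ y : ℝ, Complex.exp (κ * y) * a y = a 0 := by
      intro y
      have := is_const_of_deriv_eq_zero (fun t => (hGd t).differentiableAt)
        (fun t => (hGd t).deriv) y 0
      simpa using this
    set b : ℂ := a 0 with hb
    -- exp(κ y) * c y  is affine: has derivative b
    have hgd : ∀ y : ℝ, HasDerivAt (fun t : ℝ => Complex.exp (κ * t) * c t) b y := by
      intro y
      have h := (expc_hasDeriv κ y).mul ((coef_hasDeriv hu n y))
      have heq : κ * Complex.exp (κ * y) * c y + Complex.exp (κ * y) * coef (P2 u) n y = b := by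
        calc κ * Complex.exp (κ * y) * c y + Complex.exp (κ * y) * coef (P2 u) n y
            = Complex.exp (κ * y) * (coef (P2 u) n y + κ * c y) := by ring
          _ = Complex.exp (κ * y) * a y := by rw [hca y]
          _ = b := hGconst y
      rw [← heq]
      exact h
    have haff : ∀ y : ℝ, Complex.exp (κ * y) * c y = c 0 + b * y := by
      intro y
      have hd2 : ∀ t : ℝ, HasDerivAt (fun s : ℝ => Complex.exp (κ * s) * c s - b * s) 0 t := by
        intro t
        have hlin : HasDerivAt (fun s : ℝ => b * (s:ℂ)) b t := by
          simpa using (Complex.ofRealCLM.hasDerivAt (x := t)).const_mul b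
        have := (hgd t).sub hlin
        rwa [sub_self] at this
      have := is_const_of_deriv_eq_zero (fun t => (hd2 t).differentiableAt)
        (fun t => (hd2 t).deriv) y 0
      simp only [Complex.ofReal_zero, mul_zero, Complex.exp_zero, one_mul, sub_zero] at this
      linear_combination this
    -- quasi-periodicity
    set h : ℝ := Real.sqrt 3 / 2 with hh
    set μ : ℂ := Complex.exp ((π:ℂ) * n * Complex.I) with hμ
    have hq : ∀ y : ℝ, c (y + h) = μ * c y := fun y => coef_quasi hu.continuous hu1 huω n y
    set τ : ℂ := Complex.exp (κ * (h:ℂ)) * μ with hτ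
    have hτne : τ ≠ 1 := by
      intro habs
      apply hk
      have : Complex.exp (κ * ((h:ℝ):ℂ) + (π:ℂ) * n * Complex.I) = 1 := by
        rw [Complex.exp_add, ← hμ, ← hτ]
        exact habs
      exact mem_lambdaStar_of_exp (by rw [← hκ]; exact this)
    have heq1 : ∀ y : ℝ, τ * (c 0 + b * y) = c 0 + b * y + b * h := by
      intro y
      have h1 := haff (y + h)
      rw [hq y] at h1
      push_cast at h1
      have h2 : Complex.exp (κ * ((y:ℝ) + h)) = Complex.exp (κ * y) * Complex.exp (κ * h) := by
        rw [← Complex.exp_add]; congr 1; push_cast; ring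
      rw [h2] at h1
      have h3 : τ * (Complex.exp (κ * y) * c y) = c 0 + b * y + b * h := by
        rw [hτ]
        push_cast at h1 ⊢
        linear_combination h1
      rw [haff y] at h3
      exact h3
    have hb0 : b = 0 := by
      have e0 := heq1 0
      have e1 := heq1 1
      have : τ * b = b := by push_cast at e0 e1 ⊢; linear_combination e1 - e0
      have h5 : (τ - 1) * b = 0 := by linear_combination this
      rcases mul_eq_zero.mp h5 with h' | h'
      · exact absurd (by linear_combination h' : τ = 1) hτne
      · exact h'
    have hc0 : c 0 = 0 := by
      have e0 := heq1 0
      rw [hb0] at e0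
      push_cast at e0
      have h5 : (τ - 1) * c 0 = 0 := by linear_combination e0
      rcases mul_eq_zero.mp h5 with h' | h'
      · exact absurd (by linear_combination h' : τ = 1) hτne
      · exact h'
    intro y
    have h6 := haff y
    rw [hb0, hc0] at h6
    have hne := Complex.exp_ne_zero (κ * (y:ℂ))
    have h7 : Complex.exp (κ * (y:ℝ)) * c y = 0 := by simpa using h6
    exact (mul_eq_zero.mp h7).resolve_left hne
  -- conclude via completeness of Fourier series
  funext z
  set g : ℝ → ℂ := fun x => u (↑x + ↑z.im * Complex.I) with hg
  have hgc : Continuous g := cont_line hu.continuous z.im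
  have hgp : ∀ (x : ℝ) (N : ℤ), g (x + N) = g x := by
    intro x N
    have hNmem : ((N:ℂ)) ∈ Lambda := ⟨0, N, by push_cast; ring⟩
    have := hper ((x:ℂ) + ↑z.im * Complex.I) (N:ℂ) hNmem
    rw [hg]
    dsimp only
    rw [← this]
    congr 1
    push_cast
    ring
  have hcoefs : ∀ n : ℤ, (∫ x in (0:ℝ)..1, eN n x * g x) = 0 := fun n => key n z.im
  have := fourier_complete hgc hgp hcoefs z.re
  rw [hg] at this
  dsimp only at this
  rw [Complex.re_add_im] at this
  simpa using this
end
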